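/- For all real s, t with 0 ≤ t ≤ 0.0015 and 0 ≤ s ≤ 0.0015, we have 5/2 − 0.509475·(t+s) + 336.972·(s²+t²) ≤ 5/2, with equality if and only if s = t = 0. -/
import Mathlib


/-- For `0 ≤ t ≤ 0.0015` and `0 ≤ s ≤ 0.0015`,
`5/2 − 0.509475(t+s) + 336.972(s²+t²) ≤ 5/2`, with equality iff `s = t = 0`. -/
theorem square_local_maximizer_bound (s t : ℝ)
    (ht0 : 0 ≤ t) (ht1 : t ≤ 0.0015) (hs0 : 0 ≤ s) (hs1 : s ≤ 0.0015) :
    5 / 2 - 0.509475 * (t + s) + 336.972 * (s ^ 2 + t ^ 2) ≤ 5 / 2 ∧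
    (5 / 2 - 0.509475 * (t + s) + 336.972 * (s ^ 2 + t ^ 2) = 5 / 2 ↔ s = 0 ∧ t = 0) := by
  constructor
  · nlinarith [mul_nonneg hs0 (sub_nonneg.2 hs1), mul_nonneg ht0 (sub_nonneg.2 ht1)]
  · constructor
    · intro h
      constructor
      · by_contra hne
        have hs : 0 < s := hs0.lt_of_ne (Ne.symm hne)
        nlinarith [mul_nonneg ht0 (sub_nonneg.2 ht1), mul_pos hs (show (0:ℝ) < 0.509475 - 336.972 * s by nlinarith)]
      · by_contra hne
        have ht : 0 < t := ht0.lt_of_ne (Ne.symm hne)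
        nlinarith [mul_nonneg hs0 (sub_nonneg.2 hs1), mul_pos ht (show (0:ℝ) < 0.509475 - 336.972 * t by nlinarith)]
    · rintro ⟨rfl, rfl⟩; ring
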